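/- Let m, n ≥ 0 and let A ∈ M_{2^{m+1}, 2^m}(ℝ). Write A in 2×1 block column form with entries a_{ij} = (a_{ij}^{(1)}, a_{ij}^{(2)})ᵗ. Then (I_{2^m} ⊗ Xᵗ) A (I_{2^m} ⊗ X_nᵗ) = (I_{2^m} ⊗ X_{n+1}ᵗ)(I_{2^m} ⊗ L_nᵗ)(A ⊗ I_{n+1}), where X = (x, y)ᵗ, X_n is the degree-n monomial vector, and L_n is the (2n+2)×(n+2) matrix obtained by stacking L_{n,1} on top of L_{n,2}. -/

import Mathlib

open Matrix MvPolynomial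
open scoped Kronecker

noncomputable section

abbrev P2 : Type := MvPolynomial (Fin 2) ℝ

/-- The row vector `Xᵗ = (x, y)`. -/
def XrowOne : Matrix (Fin 1) (Fin 2) P2 := Matrix.of fun _ j => X j

/-- The row vector `X_nᵗ` of monomials of total degree `n`. -/
def Xrow (n : ℕ) : Matrix (Fin 1) (Fin (n + 1)) P2 :=
  Matrix.of fun _ k => X 0 ^ (n - (k : ℕ)) * X 1 ^ (k : ℕ)

/-- `L_n`, the `(2n+2) × (n+2)` matrix obtained by stacking `L_{n,1} = (I_{n+1}|0)`
on top of `L_{n,2} = (0|I_{n+1})`; rows are indexed by `Fin 2 × Fin (n+1)`. -/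
def Lstack (n : ℕ) : Matrix (Fin 2 × Fin (n + 1)) (Fin (n + 2)) P2 :=
  Matrix.of fun p j =>
    if p.1 = 0 then (if (p.2 : ℕ) = (j : ℕ) then 1 else 0)
    else (if (p.2 : ℕ) + 1 = (j : ℕ) then 1 else 0)

/-- For `A ∈ M_{2^{m+1},2^m}(ℝ)` written in `2 × 1` block form (rows indexed by
`Fin (2^m) × Fin 2`, columns by `Fin (2^m) × Fin 1`):
`(I_{2^m} ⊗ Xᵗ) A (I_{2^m} ⊗ X_nᵗ) = (I_{2^m} ⊗ X_{n+1}ᵗ)(I_{2^m} ⊗ L_nᵗ)(A ⊗ I_{n+1})`,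
up to the canonical reindexings of the product index types. -/
theorem blockX_mul_A (m n : ℕ)
    (A : Matrix (Fin (2 ^ m) × Fin 2) (Fin (2 ^ m) × Fin 1) ℝ) :
    (((1 : Matrix (Fin (2 ^ m)) (Fin (2 ^ m)) P2) ⊗ₖ XrowOne)
        * (A.map (MvPolynomial.C)) : Matrix (Fin (2 ^ m) × Fin 1) (Fin (2 ^ m) × Fin 1) P2)
        * ((1 : Matrix (Fin (2 ^ m)) (Fin (2 ^ m)) P2) ⊗ₖ Xrow n)
      = (((1 : Matrix (Fin (2 ^ m)) (Fin (2 ^ m)) P2) ⊗ₖ Xrow (n + 1))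
          * ((1 : Matrix (Fin (2 ^ m)) (Fin (2 ^ m)) P2) ⊗ₖ (Lstack n)ᵀ)
          * (((A.map (MvPolynomial.C)) ⊗ₖ (1 : Matrix (Fin (n + 1)) (Fin (n + 1)) P2)).submatrix
              (Equiv.prodAssoc (Fin (2 ^ m)) (Fin 2) (Fin (n + 1))).symm id)).submatrix
          id (fun p : Fin (2 ^ m) × Fin (n + 1) => ((p.1, (0 : Fin 1)), p.2)) := by
  apply Matrix.ext
  rintro ⟨i, z⟩ ⟨r, k⟩
  have h1 : ∀ (a : Fin (n+1)) (j : Fin (n+2)), ((a : ℕ) = (j : ℕ)) ↔ a.castSucc = j := by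
    intro a j; rw [Fin.ext_iff]; simp
  have h2 : ∀ (a : Fin (n+1)) (j : Fin (n+2)), ((a : ℕ) + 1 = (j : ℕ)) ↔ a.succ = j := by
    intro a j; rw [Fin.ext_iff]; simp
  have h0 : ((1 : Fin 2) = 0) = False := by decide
  simp only [h0, if_false, mul_apply, submatrix_apply, kroneckerMap_apply, Fintype.sum_prod_type,
    one_apply, Matrix.map_apply, XrowOne, Xrow, Lstack, Matrix.of_apply, transpose_apply,
    Equiv.prodAssoc_symm_apply, h1, h2,
    ite_mul, one_mul, zero_mul, mul_ite, mul_one, mul_zero, id_eq,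
    Finset.sum_ite_eq, Finset.sum_ite_eq', Finset.mem_univ, if_true,
    Fin.sum_univ_two, Fin.sum_univ_one, Fin.isValue, Fin.coe_castSucc, Fin.val_succ,
    Finset.sum_add_distrib]
  erw [Matrix.mul_apply]
  simp only [Fintype.sum_prod_type, kroneckerMap_apply, one_apply, Matrix.of_apply, Matrix.map_apply,
    ite_mul, one_mul, zero_mul, Finset.sum_ite_eq, Finset.sum_ite_eq', Finset.mem_univ, if_true,
    Fin.sum_univ_two, Fin.sum_univ_one, Fin.isValue, add_mul, Finset.sum_add_distrib]
  have hk : (k : ℕ) ≤ n := Fin.is_le k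
  rw [Nat.succ_sub hk, Nat.succ_sub_succ]
  rw [pow_succ]
  ring

end
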